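/- Let q be an odd prime power, k ≥ 2 an integer, and G a finite loopless digraph. If |G| / ω(G) > 4·(q^k − 1)·q / ((q² − 1)(q − 1)), then minrank_q(G) ≥ k + 1. Equivalently, lind_q(G) ≥ log_q(1 + ((q² − 1)(q − 1)/(4q)) · |G|/ω(G)). -/

import Mathlib

open Finset Matrix
set_option linter.unusedSectionVars false
set_option maxHeartbeats 1000000

/-- `minrank F G` of a loopless digraph `G` on `{1,…,n}` over a field `F`: the minimum
rank of an `n × n` matrix `M` over `F` with `M i i ≠ 0` for all `i` and `M i j = 0`
whenever `i ≠ j` and `(i,j)` is not an edge of `G`. -/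
noncomputable def minrank {n : ℕ} (F : Type) [Field F] (G : Fin n → Fin n → Prop) : ℕ :=
  sInf {r | ∃ M : Matrix (Fin n) (Fin n) F, (∀ i, M i i ≠ 0) ∧
    (∀ i j, i ≠ j → ¬ G i j → M i j = 0) ∧ M.rank = r}

/-- The clique number of a digraph: the maximum size of a set of vertices such that
between any two distinct vertices of the set there are directed edges in both
directions. -/
noncomputable def cliqueNumber {V : Type*} (G : V → V → Prop) : ℕ :=
  sSup {n | ∃ S : Set V, (∀ a ∈ S, ∀ b ∈ S, a ≠ b → G a b ∧ G b a) ∧ Nat.card S = n}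

section Helpers
variable {F : Type} [Field F] [Fintype F]
attribute [local instance] Classical.propDecidable

/-- normalized direction of a nonzero pair -/
noncomputable def dirOf (a b : F) : Option F := if a = 0 then none else some (b / a)

lemma dirOf_eq_iff {a b c d : F} (h1 : ¬(a = 0 ∧ b = 0)) (h2 : ¬(c = 0 ∧ d = 0)) :
    (dirOf a b = dirOf c d) ↔ a * d = b * c := by
  unfold dirOf
  by_cases ha : a = 0 <;> by_cases hc : c = 0
  · have hb : b ≠ 0 := fun hb => h1 ⟨ha, hb⟩
    simp [ha, hc, hb]
  · have hb : b ≠ 0 := fun hb => h1 ⟨ha, hb⟩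
    simp only [if_pos ha, if_neg hc, ha]
    constructor
    · intro h; simp at h
    · intro h
      exfalso
      rw [zero_mul] at h
      rcases mul_eq_zero.mp h.symm with hb0 | hc0
      · exact hb hb0
      · exact hc hc0
  · have hd : d ≠ 0 := fun hd => h2 ⟨hc, hd⟩
    simp only [if_pos hc, if_neg ha, hc]
    constructor
    · intro h; simp at h
    · intro h
      exfalso
      rw [mul_zero] at h
      rcases mul_eq_zero.mp h with ha0 | hd0
      · exact ha ha0
      · exact hd hd0
  · simp only [if_neg ha, if_neg hc, Option.some_inj]
    rw [div_eq_div_iff ha hc]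
    constructor
    · intro h; linear_combination -h
    · intro h; linear_combination -h

/-- linear independence of two vectors, hand-rolled -/
def Indep {k : ℕ} (w₁ w₂ : Fin k → F) : Prop :=
  ∀ a b : F, a • w₁ + b • w₂ = 0 → a = 0 ∧ b = 0

lemma indep_unique {k : ℕ} {w₁ w₂ : Fin k → F} (h : Indep w₁ w₂) {a b a' b' : F}
    (h1 : a • w₁ + b • w₂ = a' • w₁ + b' • w₂) : a = a' ∧ b = b' := by
  have h0 : (a - a') • w₁ + (b - b') • w₂ = (a • w₁ + b • w₂) - (a' • w₁ + b' • w₂) := by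
    rw [sub_smul, sub_smul]; abel
  rw [h1, sub_self] at h0
  obtain ⟨e1, e2⟩ := h _ _ h0
  exact ⟨sub_eq_zero.mp e1, sub_eq_zero.mp e2⟩

lemma not_indep_zero_left {k : ℕ} (w₂ : Fin k → F) : ¬ Indep 0 w₂ := by
  intro h
  have := (h 1 0 (by simp)).1
  simp at this

lemma indep_ne_zero_left {k : ℕ} {w₁ w₂ : Fin k → F} (h : Indep w₁ w₂) : w₁ ≠ 0 := by
  rintro rfl; exact not_indep_zero_left w₂ h

lemma indep_not_smul {k : ℕ} {w₁ w₂ : Fin k → F} (h : Indep w₁ w₂) :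
    ¬ ∃ c : F, w₂ = c • w₁ := by
  rintro ⟨c, rfl⟩
  have := (h c (-1) (by rw [neg_one_smul]; abel)).2
  simp at this

/-- counting functions to Bool with two prescribed values -/
lemma card_filter_bool {α : Type} [Fintype α] [Fintype (α → Bool)] {y z : α} (h : y ≠ z) :
    (univ.filter fun A : α → Bool => A y = true ∧ A z = false).card
      = 2 ^ (Fintype.card α - 2) := by
  classical
  have hcard : Fintype.card {x : α // x ≠ y ∧ x ≠ z} = Fintype.card α - 2 := by
    rw [Fintype.card_subtype]
    have : (univ.filter fun x : α => x ≠ y ∧ x ≠ z) = (univ.erase y).erase z := by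
      ext x; simp [mem_erase, and_comm]
    rw [this, card_erase_of_mem (mem_erase.mpr ⟨fun hzy => h hzy.symm, mem_univ _⟩),
      card_erase_of_mem (mem_univ _), card_univ, Nat.sub_sub]
  rw [← hcard, ← Fintype.card_bool, ← Fintype.card_fun]
  refine Finset.card_bij' (fun A _ => fun x : {x : α // x ≠ y ∧ x ≠ z} => A x.val)
    (fun g _ => fun x : α => if hx : x = y then true else if hx' : x = z then false
      else g ⟨x, hx, hx'⟩) ?_ ?_ ?_ ?_
  · intro A hA; exact mem_univ _
  · intro g hg
    simp only [mem_filter, mem_univ, true_and]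
    constructor
    · simp
    · simp [show z ≠ y from fun hzy => h hzy.symm]
  · intro A hA
    simp only [mem_filter, mem_univ, true_and] at hA
    funext x
    by_cases hx : x = y
    · subst hx; simp [hA.1]
    · by_cases hx' : x = z
      · subst hx'; simp [hx, hA.2]
      · simp [hx, hx']
  · intro g hg
    funext x
    simp [x.2.1, x.2.2]

variable {k : ℕ}

lemma smul_factor {x y : Fin k → F} {β d : F} (hβ : β ≠ 0) (h : β • x = d • y) :
    x = (β⁻¹ * d) • y := by
  calc x = β⁻¹ • (β • x) := by rw [smul_smul, inv_mul_cancel₀ hβ, one_smul]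
  _ = β⁻¹ • (d • y) := by rw [h]
  _ = (β⁻¹ * d) • y := by rw [smul_smul]

lemma filter_span_card {v : Fin k → F} (hv : v ≠ 0) :
    (univ.filter fun w : Fin k → F => ∃ c : F, w = c • v).card = Fintype.card F := by
  have himg : (univ.filter fun w : Fin k → F => ∃ c : F, w = c • v)
      = univ.image (fun c : F => c • v) := by
    ext w
    simp only [mem_filter, mem_univ, true_and, mem_image]
    constructor
    · rintro ⟨c, rfl⟩; exact ⟨c, rfl⟩
    · rintro ⟨c, rfl⟩; exact ⟨c, rfl⟩
  rw [himg, card_image_of_injective _ (smul_left_injective F hv), card_univ]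

lemma card_not_span {v : Fin k → F} (hv : v ≠ 0) :
    (univ.filter fun w : Fin k → F => ¬ ∃ c : F, w = c • v).card
      = Fintype.card F ^ k - Fintype.card F := by
  have := card_filter_add_card_filter_not
    (s := (univ : Finset (Fin k → F))) (p := fun w => ∃ c : F, w = c • v)
  rw [filter_span_card hv, card_univ] at this
  have hc : Fintype.card (Fin k → F) = Fintype.card F ^ k := by
    rw [Fintype.card_fun, Fintype.card_fin]
  omega

lemma card_fiber {v : Fin k → F} (hv : v ≠ 0) {a b : F} (hab : ¬(a = 0 ∧ b = 0)) :
    (univ.filter fun w : (Fin k → F) × (Fin k → F) =>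
        Indep w.1 w.2 ∧ a • w.1 + b • w.2 = v).card
      = Fintype.card F ^ k - Fintype.card F := by
  rw [← card_not_span hv]
  rcases eq_or_ne b 0 with hb | hb
  · -- b = 0, a ≠ 0 ; project to second coordinate
    subst hb
    have ha : a ≠ 0 := fun h => hab ⟨h, rfl⟩
    refine Finset.card_bij' (fun w _ => w.2) (fun w₂ _ => (a⁻¹ • v, w₂)) ?_ ?_ ?_ ?_
    · rintro ⟨w₁, w₂⟩ hw
      simp only [mem_filter, mem_univ, true_and] at hw ⊢
      obtain ⟨hind, heq⟩ := hw
      simp only [zero_smul, add_zero] at heq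
      have hw₁ : w₁ = a⁻¹ • v := by
        rw [← heq, smul_smul, inv_mul_cancel₀ ha, one_smul]
      rintro ⟨c, rfl⟩
      rcases eq_or_ne c 0 with hc | hc
      · have := (hind 0 1 (by simp [hc])).2
        simp at this
      · have := (hind c (-(a⁻¹)) (by rw [hw₁]; match_scalars; ring)).2
        rw [neg_eq_zero] at this
        exact inv_ne_zero ha this
    · intro w₂ hw₂
      simp only [mem_filter, mem_univ, true_and] at hw₂ ⊢
      constructor
      · intro α β hαβ
        by_cases hβ : β = 0
        · subst hβ
          simp only [zero_smul, add_zero, smul_smul] at hαβ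
          have h := (smul_eq_zero.mp hαβ).resolve_right hv
          refine ⟨?_, rfl⟩
          rcases mul_eq_zero.mp h with h' | h'
          · exact h'
          · exact absurd h' (inv_ne_zero ha)
        · exfalso
          apply hw₂
          have h5 : β • w₂ = (-(α * a⁻¹)) • v := by
            linear_combination (norm := module) hαβ
          exact ⟨_, smul_factor hβ h5⟩
      · rw [smul_smul, mul_inv_cancel₀ ha, one_smul, zero_smul, add_zero]
    · rintro ⟨w₁, w₂⟩ hw
      simp only [mem_filter, mem_univ, true_and] at hw
      obtain ⟨hind, heq⟩ := hw
      simp only [zero_smul, add_zero] at heq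
      have hw₁ : w₁ = a⁻¹ • v := by
        rw [← heq, smul_smul, inv_mul_cancel₀ ha, one_smul]
      simp [hw₁]
    · intro w₂ hw₂; rfl
  · -- b ≠ 0 ; project to first coordinate
    refine Finset.card_bij' (fun w _ => w.1) (fun w₁ _ => (w₁, b⁻¹ • (v - a • w₁)))
      ?_ ?_ ?_ ?_
    · rintro ⟨w₁, w₂⟩ hw
      simp only [mem_filter, mem_univ, true_and] at hw ⊢
      obtain ⟨hind, heq⟩ := hw
      rintro ⟨c, rfl⟩
      have h5 : b • w₂ = (1 - a * c) • v := by
        linear_combination (norm := module) heq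
      have hw₂ : w₂ = (b⁻¹ * (1 - a * c)) • v := smul_factor hb h5
      rcases eq_or_ne c 0 with hc | hc
      · exact indep_ne_zero_left hind (by simp [hc])
      · have := (hind (b⁻¹ * (1 - a * c)) (-c) (by rw [hw₂]; match_scalars; ring)).2
        rw [neg_eq_zero] at this
        exact hc this
    · intro w₁ hw₁
      simp only [mem_filter, mem_univ, true_and] at hw₁ ⊢
      have hw₁0 : w₁ ≠ 0 := fun h => hw₁ ⟨0, by simp [h]⟩
      constructor
      · intro α β hαβ
        by_cases hβ : β = 0
        · subst hβ
          simp only [zero_smul, add_zero] at hαβ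
          exact ⟨(smul_eq_zero.mp hαβ).resolve_right hw₁0, rfl⟩
        · exfalso
          set γ : F := β * b⁻¹ with hγdef
          have hγ : γ ≠ 0 := mul_ne_zero hβ (inv_ne_zero hb)
          have h5 : γ • v = (γ * a - α) • w₁ := by
            linear_combination (norm := module) hαβ
          have h6 : v = (γ⁻¹ * (γ * a - α)) • w₁ := smul_factor hγ h5
          set δ : F := γ⁻¹ * (γ * a - α) with hδdef
          by_cases hδ : δ = 0
          · rw [hδ, zero_smul] at h6; exact hv h6
          · exact hw₁ ⟨δ⁻¹, by rw [h6, smul_smul, inv_mul_cancel₀ hδ, one_smul]⟩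
      · rw [smul_smul, mul_inv_cancel₀ hb, one_smul]; abel
    · rintro ⟨w₁, w₂⟩ hw
      simp only [mem_filter, mem_univ, true_and] at hw
      obtain ⟨hind, heq⟩ := hw
      have h5 : b • w₂ = (1 : F) • (v - a • w₁) := by
        linear_combination (norm := module) heq
      have : w₂ = (b⁻¹ * (1 : F)) • (v - a • w₁) := smul_factor hb h5
      rw [mul_one] at this
      simp [this]
    · intro w₁ hw₁; rfl

lemma card_pairs {v : Fin k → F} (hv : v ≠ 0) :
    (univ.filter fun w : (Fin k → F) × (Fin k → F) =>
        Indep w.1 w.2 ∧ ∃ a b : F, a • w.1 + b • w.2 = v).card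
      = (Fintype.card F ^ 2 - 1) * (Fintype.card F ^ k - Fintype.card F) := by
  have hsplit : (univ.filter fun w : (Fin k → F) × (Fin k → F) =>
        Indep w.1 w.2 ∧ ∃ a b : F, a • w.1 + b • w.2 = v)
      = ((univ : Finset (F × F)).erase (0, 0)).biUnion (fun ab =>
          univ.filter fun w : (Fin k → F) × (Fin k → F) =>
            Indep w.1 w.2 ∧ ab.1 • w.1 + ab.2 • w.2 = v) := by
    ext w
    simp only [mem_filter, mem_univ, true_and, mem_biUnion, mem_erase]
    constructor
    · rintro ⟨hind, a, b, hab⟩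
      refine ⟨(a, b), ⟨?_, trivial⟩, hind, hab⟩
      intro h
      rw [Prod.mk.injEq] at h
      obtain ⟨rfl, rfl⟩ := h
      simp only [zero_smul, add_zero] at hab
      exact hv hab.symm
    · rintro ⟨ab, _, hind, hab⟩
      exact ⟨hind, ab.1, ab.2, hab⟩
  rw [hsplit, card_biUnion]
  · have hconst : ∀ ab ∈ (univ : Finset (F × F)).erase (0, 0),
        (univ.filter fun w : (Fin k → F) × (Fin k → F) =>
          Indep w.1 w.2 ∧ ab.1 • w.1 + ab.2 • w.2 = v).card
        = Fintype.card F ^ k - Fintype.card F := by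
      intro ab hab
      refine card_fiber hv ?_
      intro ⟨h1, h2⟩
      rw [mem_erase] at hab
      exact hab.1 (Prod.ext h1 h2)
    rw [Finset.sum_congr rfl hconst, Finset.sum_const,
      card_erase_of_mem (mem_univ _), card_univ, Fintype.card_prod, smul_eq_mul]
    congr 1
    rw [pow_two]
  · intro x hx y hy hxy
    refine disjoint_left.mpr ?_
    intro w hw1 hw2
    simp only [mem_filter, mem_univ, true_and] at hw1 hw2
    obtain ⟨e1, e2⟩ := indep_unique hw1.1 (hw1.2.trans hw2.2.symm)
    exact hxy (Prod.ext e1 e2)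

/-- the color data: a pair of vectors spanning a plane, and a two-coloring of the
projective line of directions within the plane (in coordinates). -/
def accepts {n : ℕ} (u v : Fin n → (Fin k → F)) (i : Fin n)
    (c : ((Fin k → F) × (Fin k → F)) × (Option F → Bool)) : Prop :=
  Indep c.1.1 c.1.2 ∧ ∃ a b : F, a • c.1.1 + b • c.1.2 = v i ∧
    c.2 (dirOf a b) = false ∧
    c.2 (dirOf (u i ⬝ᵥ c.1.2) (-(u i ⬝ᵥ c.1.1))) = true

lemma card_filter_prod {α β : Type} [Fintype α] [Fintype β] (P : α × β → Prop) :
    (univ.filter fun p : α × β => P p).card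
      = ∑ x : α, (univ.filter fun y : β => P (x, y)).card := by
  rw [card_filter, Fintype.sum_prod_type]
  exact sum_congr rfl fun x _ => (card_filter _ _).symm

lemma guarantee {n : ℕ} {u v : Fin n → (Fin k → F)} {i j : Fin n}
    {c : ((Fin k → F) × (Fin k → F)) × (Option F → Bool)}
    (hi : accepts u v i c) (hj : accepts u v j c)
    (hdi : u i ⬝ᵥ v i ≠ 0) (hdj : u j ⬝ᵥ v j ≠ 0) :
    u i ⬝ᵥ v j ≠ 0 := by
  obtain ⟨⟨w₁, w₂⟩, A⟩ := c
  obtain ⟨hind, ai, bi, hrepi, hAfi, hAti⟩ := hi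
  obtain ⟨-, aj, bj, hrepj, hAfj, hAtj⟩ := hj
  simp only at hrepi hAfi hAti hrepj hAfj hAtj
  set p : F := u i ⬝ᵥ w₁ with hp
  set s : F := u i ⬝ᵥ w₂ with hs
  have hdot : ∀ (a b : F), u i ⬝ᵥ (a • w₁ + b • w₂) = a * p + b * s := by
    intro a b
    rw [dotProduct_add, dotProduct_smul, dotProduct_smul, smul_eq_mul, smul_eq_mul]
  have hpsi : ai * p + bi * s ≠ 0 := by rw [← hdot, hrepi]; exact hdi
  have hps : ¬ ((s : F) = 0 ∧ (-p : F) = 0) := by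
    rintro ⟨h1, h2⟩
    rw [neg_eq_zero] at h2
    apply hpsi
    rw [h1, h2]; ring
  have habj : ¬ ((aj : F) = 0 ∧ (bj : F) = 0) := by
    rintro ⟨h1, h2⟩
    rw [h1, h2] at hrepj
    rw [show (0:F) • w₁ + (0:F) • w₂ = 0 by simp] at hrepj
    rw [← hrepj] at hdj
    simp at hdj
  intro hcontra
  rw [← hrepj, hdot] at hcontra
  have heqdir : dirOf aj bj = dirOf s (-p) := by
    rw [dirOf_eq_iff habj hps]
    linear_combination -hcontra
  rw [heqdir, hAti] at hAfj
  exact Bool.true_eq_false.mp hAfj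

lemma key_bound {n : ℕ} (hk : 2 ≤ k) (u v : Fin n → (Fin k → F))
    (G : Fin n → Fin n → Prop)
    (hdiag : ∀ i, u i ⬝ᵥ v i ≠ 0)
    (hzero : ∀ i j, i ≠ j → ¬ G i j → u i ⬝ᵥ v j = 0) :
    n * (Fintype.card F ^ 2 - 1) ≤ 4 * (Fintype.card F ^ k - 1) * cliqueNumber G := by
  have hq2 : 2 ≤ Fintype.card F := Fintype.one_lt_card
  -- per-vertex acceptance count
  have hvertex : ∀ i : Fin n,
      (univ.filter fun c : ((Fin k → F) × (Fin k → F)) × (Option F → Bool) =>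
        accepts u v i c).card = (((Fintype.card F) ^ 2 - 1) * ((Fintype.card F) ^ k - (Fintype.card F))) * 2 ^ ((Fintype.card F) - 1) := by
    intro i
    have hvne : v i ≠ 0 := by
      intro h
      apply hdiag i
      rw [h, dotProduct_zero]
    rw [card_filter_prod]
    have hinner : ∀ w : (Fin k → F) × (Fin k → F),
        (univ.filter fun A : Option F → Bool => accepts u v i ((w.1, w.2), A)).card
        = if (Indep w.1 w.2 ∧ ∃ a b : F, a • w.1 + b • w.2 = v i)
            then 2 ^ ((Fintype.card F) - 1) else 0 := by
      rintro ⟨w₁, w₂⟩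
      by_cases hgood : Indep w₁ w₂ ∧ ∃ a b : F, a • w₁ + b • w₂ = v i
      · rw [if_pos hgood]
        obtain ⟨hind, a₀, b₀, hrep⟩ := hgood
        set p : F := u i ⬝ᵥ w₁ with hp
        set s : F := u i ⬝ᵥ w₂ with hs
        have hdot : ∀ (a b : F), u i ⬝ᵥ (a • w₁ + b • w₂) = a * p + b * s := by
          intro a b
          rw [dotProduct_add, dotProduct_smul, dotProduct_smul, smul_eq_mul, smul_eq_mul]
        have hpsum : a₀ * p + b₀ * s ≠ 0 := by rw [← hdot, hrep]; exact hdiag i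
        have hab₀ : ¬ ((a₀ : F) = 0 ∧ (b₀ : F) = 0) := by
          rintro ⟨h1, h2⟩
          apply hpsum; rw [h1, h2]; ring
        have hps : ¬ ((s : F) = 0 ∧ (-p : F) = 0) := by
          rintro ⟨h1, h2⟩
          rw [neg_eq_zero] at h2
          apply hpsum
          rw [h1, h2]; ring
        have hne : dirOf s (-p) ≠ dirOf a₀ b₀ := by
          rw [Ne, dirOf_eq_iff hps hab₀]
          intro h
          apply hpsum
          linear_combination h
        have hfeq : (univ.filter fun A : Option F → Bool =>
            accepts u v i ((w₁, w₂), A))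
            = univ.filter fun A : Option F → Bool =>
              A (dirOf s (-p)) = true ∧ A (dirOf a₀ b₀) = false := by
          ext A
          simp only [mem_filter, mem_univ, true_and]
          constructor
          · rintro ⟨-, a, b, hab, hAf, hAt⟩
            obtain ⟨rfl, rfl⟩ := indep_unique hind (hab.trans hrep.symm)
            exact ⟨hAt, hAf⟩
          · rintro ⟨hAt, hAf⟩
            exact ⟨hind, a₀, b₀, hrep, hAf, hAt⟩
        rw [hfeq]
        have hcb := card_filter_bool hne
        have hexp : Fintype.card (Option F) - 2 = (Fintype.card F) - 1 := by
          rw [Fintype.card_option]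
          exact Nat.add_sub_add_right _ 1 1
        rw [hexp] at hcb
        exact hcb
      · rw [if_neg hgood]
        rw [Finset.card_eq_zero, Finset.filter_eq_empty_iff]
        intro A _ hacc
        obtain ⟨hind, a, b, hab, -, -⟩ := hacc
        exact hgood ⟨hind, a, b, hab⟩
    rw [Finset.sum_congr rfl fun w _ => hinner w, Finset.sum_ite, Finset.sum_const,
      Finset.sum_const, smul_eq_mul, smul_eq_mul, mul_zero, add_zero, card_pairs hvne]
  -- each color class is a clique
  have hclass : ∀ c : ((Fin k → F) × (Fin k → F)) × (Option F → Bool),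
      (univ.filter fun i : Fin n => accepts u v i c).card ≤ cliqueNumber G := by
    intro c
    set T : Finset (Fin n) := univ.filter fun i : Fin n => accepts u v i c with hTdef
    have hS : ∀ a ∈ (T : Set (Fin n)), ∀ b ∈ (T : Set (Fin n)), a ≠ b → G a b ∧ G b a := by
      intro x hx y hy hxy
      rw [Finset.mem_coe, hTdef, mem_filter] at hx hy
      constructor
      · by_contra hG
        exact guarantee hx.2 hy.2 (hdiag x) (hdiag y) (hzero x y hxy hG)
      · by_contra hG
        exact guarantee hy.2 hx.2 (hdiag y) (hdiag x) (hzero y x hxy.symm hG)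
    have hbdd : BddAbove {m | ∃ S : Set (Fin n),
        (∀ a ∈ S, ∀ b ∈ S, a ≠ b → G a b ∧ G b a) ∧ Nat.card S = m} := by
      refine ⟨n, ?_⟩
      rintro m ⟨S, -, rfl⟩
      calc Nat.card S ≤ Nat.card (Fin n) :=
            Nat.card_le_card_of_injective _ Subtype.val_injective
      _ = n := by rw [Nat.card_eq_fintype_card, Fintype.card_fin]
    have hmem : T.card ∈ {m | ∃ S : Set (Fin n),
        (∀ a ∈ S, ∀ b ∈ S, a ≠ b → G a b ∧ G b a) ∧ Nat.card S = m} :=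
      ⟨(T : Set (Fin n)), hS, Nat.card_eq_finsetCard T⟩
    exact le_csSup hbdd hmem
  -- total number of useful colors
  have hcolors : (univ.filter fun c : ((Fin k → F) × (Fin k → F)) × (Option F → Bool) =>
      Indep c.1.1 c.1.2).card ≤ (((Fintype.card F) ^ k - 1) * ((Fintype.card F) ^ k - (Fintype.card F))) * 2 ^ ((Fintype.card F) + 1) := by
    rw [card_filter_prod]
    have hinner : ∀ w : (Fin k → F) × (Fin k → F),
        (univ.filter fun A : Option F → Bool => Indep w.1 w.2).card
          = if Indep w.1 w.2 then 2 ^ ((Fintype.card F) + 1) else 0 := by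
      intro w
      by_cases hw : Indep w.1 w.2
      · rw [if_pos hw, Finset.filter_true_of_mem fun _ _ => hw, card_univ,
          Fintype.card_fun, Fintype.card_option, Fintype.card_bool]
      · rw [if_neg hw, Finset.card_eq_zero, Finset.filter_eq_empty_iff]
        exact fun _ _ h => hw h
    rw [Finset.sum_congr rfl fun w _ => hinner w, Finset.sum_ite, Finset.sum_const,
      Finset.sum_const, smul_eq_mul, smul_eq_mul, mul_zero, add_zero]
    have hpairs : (univ.filter fun w : (Fin k → F) × (Fin k → F) =>
        Indep w.1 w.2).card ≤ ((Fintype.card F) ^ k - 1) * ((Fintype.card F) ^ k - (Fintype.card F)) := by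
      rw [card_filter_prod]
      have hzero0 : (univ.filter fun w₂ : Fin k → F =>
          Indep (0 : Fin k → F) w₂).card = 0 := by
        rw [Finset.card_eq_zero, Finset.filter_eq_empty_iff]
        intro w₂ _ h
        exact not_indep_zero_left w₂ h
      calc ∑ w₁ : Fin k → F, (univ.filter fun w₂ => Indep w₁ w₂).card
          = ∑ w₁ ∈ univ.erase (0 : Fin k → F),
              (univ.filter fun w₂ => Indep w₁ w₂).card :=
            (Finset.sum_erase (f := fun w₁ : Fin k → F =>
              (univ.filter fun w₂ : Fin k → F => Indep w₁ w₂).card)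
              (a := (0 : Fin k → F)) univ hzero0).symm
      _ ≤ ∑ _w₁ ∈ univ.erase (0 : Fin k → F), ((Fintype.card F) ^ k - (Fintype.card F)) := by
          refine Finset.sum_le_sum ?_
          intro w₁ hw₁
          rw [mem_erase] at hw₁
          calc (univ.filter fun w₂ => Indep w₁ w₂).card
              ≤ (univ.filter fun w₂ : Fin k → F => ¬ ∃ c : F, w₂ = c • w₁).card := by
                refine Finset.card_le_card ?_
                intro w₂ hw₂
                rw [mem_filter] at hw₂ ⊢
                exact ⟨hw₂.1, indep_not_smul hw₂.2⟩
          _ = (Fintype.card F) ^ k - (Fintype.card F) := card_not_span hw₁.1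
      _ = ((Fintype.card F) ^ k - 1) * ((Fintype.card F) ^ k - (Fintype.card F)) := by
          rw [Finset.sum_const, smul_eq_mul, card_erase_of_mem (mem_univ _), card_univ]
          congr 2
          rw [Fintype.card_fun, Fintype.card_fin]
    exact Nat.mul_le_mul_right _ hpairs
  -- double counting
  have hdouble : ∑ i : Fin n,
        (univ.filter fun c : ((Fin k → F) × (Fin k → F)) × (Option F → Bool) =>
          accepts u v i c).card
      = ∑ c : ((Fin k → F) × (Fin k → F)) × (Option F → Bool),
          (univ.filter fun i : Fin n => accepts u v i c).card := by
    simp only [card_filter]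
    rw [Finset.sum_comm]
  -- the color sum is supported on independent colors
  have hsupp : ∑ c : ((Fin k → F) × (Fin k → F)) × (Option F → Bool),
        (univ.filter fun i : Fin n => accepts u v i c).card
      ≤ ((((Fintype.card F) ^ k - 1) * ((Fintype.card F) ^ k - (Fintype.card F))) * 2 ^ ((Fintype.card F) + 1)) * cliqueNumber G := by
    have hsplit : ∑ c : ((Fin k → F) × (Fin k → F)) × (Option F → Bool),
          (univ.filter fun i : Fin n => accepts u v i c).card
        = ∑ c ∈ univ.filter (fun c : ((Fin k → F) × (Fin k → F)) × (Option F → Bool) =>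
            Indep c.1.1 c.1.2),
            (univ.filter fun i : Fin n => accepts u v i c).card := by
      refine (Finset.sum_filter_of_ne ?_).symm
      intro c _ hc
      by_contra hcind
      have hempty : (univ.filter fun i : Fin n => accepts u v i c) = ∅ := by
        rw [Finset.filter_eq_empty_iff]
        intro i _ hacc
        exact hcind hacc.1
      rw [hempty] at hc
      simp at hc
    rw [hsplit]
    calc ∑ c ∈ univ.filter (fun c : ((Fin k → F) × (Fin k → F)) × (Option F → Bool) =>
            Indep c.1.1 c.1.2), (univ.filter fun i : Fin n => accepts u v i c).card
        ≤ (univ.filter (fun c : ((Fin k → F) × (Fin k → F)) × (Option F → Bool) =>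
            Indep c.1.1 c.1.2)).card * cliqueNumber G := by
          rw [← smul_eq_mul]
          exact Finset.sum_le_card_nsmul _ _ _ fun c _ => hclass c
    _ ≤ ((((Fintype.card F) ^ k - 1) * ((Fintype.card F) ^ k - (Fintype.card F))) * 2 ^ ((Fintype.card F) + 1)) * cliqueNumber G :=
          Nat.mul_le_mul_right _ hcolors
  -- assemble
  have hLHS : ∑ i : Fin n,
      (univ.filter fun c : ((Fin k → F) × (Fin k → F)) × (Option F → Bool) =>
        accepts u v i c).card = n * ((((Fintype.card F) ^ 2 - 1) * ((Fintype.card F) ^ k - (Fintype.card F))) * 2 ^ ((Fintype.card F) - 1)) := by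
    rw [Finset.sum_congr rfl fun i _ => hvertex i, Finset.sum_const, smul_eq_mul,
      card_univ, Fintype.card_fin]
  have hmain : n * ((((Fintype.card F) ^ 2 - 1) * ((Fintype.card F) ^ k - (Fintype.card F))) * 2 ^ ((Fintype.card F) - 1))
      ≤ ((((Fintype.card F) ^ k - 1) * ((Fintype.card F) ^ k - (Fintype.card F))) * 2 ^ ((Fintype.card F) + 1)) * cliqueNumber G := by
    rw [← hLHS, hdouble]
    exact hsupp
  have hpow : (2:ℕ) ^ ((Fintype.card F) + 1) = 2 ^ ((Fintype.card F) - 1) * 4 := by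
    rw [show (Fintype.card F) + 1 = ((Fintype.card F) - 1) + 2 by omega, pow_add]
    norm_num
  rw [hpow] at hmain
  have h1 : (Fintype.card F) < (Fintype.card F) ^ k := by
    calc (Fintype.card F) = (Fintype.card F) ^ 1 := (pow_one (Fintype.card F)).symm
    _ < (Fintype.card F) ^ k := Nat.pow_lt_pow_right (by omega) (by omega)
  set ω := cliqueNumber G with hω
  set A := (Fintype.card F) ^ 2 - 1 with hA
  set B := (Fintype.card F) ^ k - (Fintype.card F) with hB
  set K := (Fintype.card F) ^ k - 1 with hK
  set E := (2:ℕ) ^ ((Fintype.card F) - 1) with hE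
  have hD : 0 < B * E := by
    have h2 : (0:ℕ) < E := by rw [hE]; exact pow_pos (by omega) _
    have h3 : 0 < B := by rw [hB]; omega
    exact Nat.mul_pos h3 h2
  clear_value A B K E ω
  refine Nat.le_of_mul_le_mul_right ?_ hD
  calc n * A * (B * E) = n * (A * B * E) := by ring
  _ ≤ K * B * (E * 4) * ω := hmain
  _ = 4 * K * ω * (B * E) := by ring

lemma exists_factorization {n : ℕ} (M : Matrix (Fin n) (Fin n) F) (h : M.rank ≤ k) :
    ∃ u v : Fin n → (Fin k → F), ∀ i j, u i ⬝ᵥ v j = M i j := by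
  classical
  set W : Submodule F (Fin n → F) := LinearMap.range M.mulVecLin with hW
  have hr : Module.finrank F W ≤ k := h
  set r := Module.finrank F W with hrdef
  let b : Module.Basis (Fin r) F W := Module.finBasis F W
  let c : Fin n → W := fun j => ⟨M.mulVec (Pi.single j 1), ⟨Pi.single j 1, rfl⟩⟩
  have hc : ∀ i j, ((c j : Fin n → F) i) = M i j := by
    intro i j
    show (M.mulVec (Pi.single j 1)) i = M i j
    rw [Matrix.mulVec_single]
    exact mul_one _
  refine ⟨fun i => fun t => if ht : (t : ℕ) < r then ((b ⟨t, ht⟩ : Fin n → F) i) else 0,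
          fun j => fun t => if ht : (t : ℕ) < r then b.repr (c j) ⟨t, ht⟩ else 0, ?_⟩
  intro i j
  have hterm : ∀ t : Fin k,
      (if ht : (t : ℕ) < r then ((b ⟨t, ht⟩ : Fin n → F) i) else 0) *
      (if ht : (t : ℕ) < r then (b.repr (c j) ⟨t, ht⟩ : F) else 0)
      = if ht : (t : ℕ) < r then ((b ⟨t, ht⟩ : Fin n → F) i) * b.repr (c j) ⟨t, ht⟩
        else 0 := by
    intro t
    by_cases ht : (t : ℕ) < r
    · rw [dif_pos ht, dif_pos ht, dif_pos ht]
    · rw [dif_neg ht, dif_neg ht, dif_neg ht, zero_mul]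
  show (∑ t : Fin k, _) = M i j
  rw [Finset.sum_congr rfl fun t _ => hterm t]
  have himage : ∀ t : Fin k, t ∉ (univ : Finset (Fin r)).image (Fin.castLE hr) →
      (if ht : (t : ℕ) < r then ((b ⟨t, ht⟩ : Fin n → F) i) * b.repr (c j) ⟨t, ht⟩
        else 0) = 0 := by
    intro t ht
    rw [dif_neg]
    intro hlt
    apply ht
    rw [mem_image]
    exact ⟨⟨(t : ℕ), hlt⟩, mem_univ _, by ext; simp [Fin.castLE]⟩
  rw [← Finset.sum_subset (Finset.subset_univ _) (fun t _ htn => himage t htn)]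
  rw [Finset.sum_image (fun s _ s' _ hss => Fin.castLE_injective hr hss)]
  have hsum : ∀ s : Fin r,
      (if ht : ((Fin.castLE hr s : Fin k) : ℕ) < r
        then ((b ⟨((Fin.castLE hr s : Fin k) : ℕ), ht⟩ : Fin n → F) i) *
          b.repr (c j) ⟨((Fin.castLE hr s : Fin k) : ℕ), ht⟩ else 0)
      = ((b s : Fin n → F) i) * b.repr (c j) s := by
    intro s
    rw [dif_pos (by simp [Fin.castLE] : ((Fin.castLE hr s : Fin k) : ℕ) < r)]
    congr 1 <;> congr 1 <;> ext <;> simp [Fin.castLE]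
  rw [Finset.sum_congr rfl fun s _ => hsum s]
  have hcoe : ((∑ s : Fin r, b.repr (c j) s • b s : W) : Fin n → F) i
      = ∑ s : Fin r, (b.repr (c j) s : F) * ((b s : Fin n → F) i) := by
    rw [Submodule.coe_sum, Finset.sum_apply]
    exact Finset.sum_congr rfl fun s _ => by rw [Submodule.coe_smul, Pi.smul_apply, smul_eq_mul]
  calc ∑ s : Fin r, ((b s : Fin n → F) i) * b.repr (c j) s
      = ∑ s : Fin r, (b.repr (c j) s : F) * ((b s : Fin n → F) i) :=
        Finset.sum_congr rfl fun s _ => mul_comm _ _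
  _ = ((∑ s : Fin r, b.repr (c j) s • b s : W) : Fin n → F) i := hcoe.symm
  _ = ((c j : Fin n → F) i) := by rw [b.sum_repr (c j)]
  _ = M i j := hc i j

end Helpers

/-- Let `q` be an odd prime power, `k ≥ 2`, and `G` a finite loopless digraph on `n`
vertices.  If `|G| / ω(G) > 4 (q^k - 1) q / ((q² - 1)(q - 1))` (stated
cross-multiplied), then `minrank_q(G) ≥ k + 1`. -/
theorem minrank_ge_of_cliqueNumber (q k n : ℕ) (hq : IsPrimePow q) (hodd : Odd q)
    (hk : 2 ≤ k) (F : Type) [Field F] [Fintype F] (hF : Fintype.card F = q)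
    (G : Fin n → Fin n → Prop) (hloopless : ∀ i, ¬ G i i)
    (hineq : cliqueNumber G * (4 * (q ^ k - 1) * q) <
      n * ((q ^ 2 - 1) * (q - 1))) :
    k + 1 ≤ minrank F G := by
  classical
  by_contra hcon
  rw [not_le] at hcon
  have hle : minrank F G ≤ k := by omega
  have hne : {r | ∃ M : Matrix (Fin n) (Fin n) F, (∀ i, M i i ≠ 0) ∧
      (∀ i j, i ≠ j → ¬ G i j → M i j = 0) ∧ M.rank = r}.Nonempty :=
    ⟨(1 : Matrix (Fin n) (Fin n) F).rank, 1,
      fun i => by rw [Matrix.one_apply_eq]; exact one_ne_zero,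
      fun i j hij _ => Matrix.one_apply_ne hij, rfl⟩
  have hmem : minrank F G ∈ {r | ∃ M : Matrix (Fin n) (Fin n) F, (∀ i, M i i ≠ 0) ∧
      (∀ i j, i ≠ j → ¬ G i j → M i j = 0) ∧ M.rank = r} := Nat.sInf_mem hne
  obtain ⟨M, hMdiag, hMoff, hMrank⟩ := hmem
  have hMr : M.rank ≤ k := by rw [hMrank]; exact hle
  obtain ⟨u, v, huv⟩ := exists_factorization M hMr
  have hkey := key_bound hk u v G
    (fun i => by rw [huv]; exact hMdiag i)
    (fun i j hij hG => by rw [huv]; exact hMoff i j hij hG)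
  rw [hF] at hkey
  -- hkey : n * (q ^ 2 - 1) ≤ 4 * (q ^ k - 1) * cliqueNumber G
  have h1 : n * ((q ^ 2 - 1) * (q - 1)) ≤ (4 * (q ^ k - 1) * cliqueNumber G) * (q - 1) := by
    rw [← mul_assoc]
    exact Nat.mul_le_mul_right _ hkey
  have h2 : (4 * (q ^ k - 1) * cliqueNumber G) * (q - 1)
      ≤ (4 * (q ^ k - 1) * cliqueNumber G) * q :=
    Nat.mul_le_mul_left _ (Nat.sub_le q 1)
  have h3 : (4 * (q ^ k - 1) * cliqueNumber G) * q
      = cliqueNumber G * (4 * (q ^ k - 1) * q) := by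
    set K := q ^ k - 1
    ring
  have : n * ((q ^ 2 - 1) * (q - 1)) ≤ cliqueNumber G * (4 * (q ^ k - 1) * q) :=
    (h1.trans h2).trans_eq h3
  exact absurd hineq (not_lt.mpr this)
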